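/- (Self-improvement of I_α^D under normalization) Let 0 < β ≤ α < mn, 0 < p₀ < n/α, and f⃗ nonnegative with ‖f⃗‖_{M^{P⃗,p₀}} = 1. Then for every x ∈ ℝⁿ, I_α^D(f⃗)(x) ≲ I_β^D(f⃗)(x)^{(n−αp₀)/(n−βp₀)}. -/

import Mathlib

open MeasureTheory ENNReal

noncomputable section

variable {n : ℕ}

/-- Axis-parallel cube with lower corner `a` and side length `r` (half-open). -/
def cube (a : Fin n → ℝ) (r : ℝ) : Set (Fin n → ℝ) :=
  {y | ∀ i, a i ≤ y i ∧ y i < a i + r}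

/-- The dyadic cube `2^{-k}(m + [0,1)^n)`. -/
def dyadicCube (k : ℤ) (mv : Fin n → ℤ) : Set (Fin n → ℝ) :=
  cube (fun i => (mv i : ℝ) * (2 : ℝ) ^ (-k)) ((2 : ℝ) ^ (-k))

/-- The concentric triple `3Q` of the cube with corner `a` and side `r`. -/
def tripleCube (a : Fin n → ℝ) (r : ℝ) : Set (Fin n → ℝ) :=
  cube (fun i => a i - r) (3 * r)

/-- The Morrey norm `‖f‖_{M^{p,p₀}}`. -/
def morreyNorm (p p0 : ℝ) (f : (Fin n → ℝ) → ℝ) : ℝ≥0∞ :=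
  ⨆ (a : Fin n → ℝ) (r : ℝ) (_ : 0 < r),
    volume (cube a r) ^ (1 / p0 - 1 / p) *
      (∫⁻ x in cube a r, ENNReal.ofReal |f x| ^ p) ^ (1 / p)

/-- The product Morrey norm `‖f⃗‖_{M^{P⃗,p₀}}`. -/
def prodMorreyNorm {m : ℕ} (P : Fin m → ℝ) (p p0 : ℝ)
    (f : Fin m → (Fin n → ℝ) → ℝ) : ℝ≥0∞ :=
  ⨆ (a : Fin n → ℝ) (r : ℝ) (_ : 0 < r),
    volume (cube a r) ^ (1 / p0 - 1 / p) *
      ∏ j, (∫⁻ x in cube a r, ENNReal.ofReal |f j x| ^ P j) ^ (1 / P j)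

/-- The Radon–Morrey norm `‖g‖_{M_μ^{q,q₀}}`. -/
def radonMorreyNorm (μ : Measure (Fin n → ℝ)) (q q0 : ℝ)
    (g : (Fin n → ℝ) → ℝ≥0∞) : ℝ≥0∞ :=
  ⨆ (a : Fin n → ℝ) (r : ℝ) (_ : 0 < r),
    volume (cube a r) ^ (1 / q0 - 1 / q) * (∫⁻ x in cube a r, g x ^ q ∂μ) ^ (1 / q)

/-- The growth norm `‖μ‖_β := sup_Q μ(Q)/ℓ_Q^β`. -/
def measureGrowthNorm (μ : Measure (Fin n → ℝ)) (β : ℝ) : ℝ≥0∞ :=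
  ⨆ (a : Fin n → ℝ) (r : ℝ) (_ : 0 < r), μ (cube a r) / ENNReal.ofReal r ^ β

/-- The `m`-sublinear fractional maximal operator `𝔐_α`. -/
def fracMaximal {m : ℕ} (α : ℝ) (f : Fin m → (Fin n → ℝ) → ℝ)
    (x : Fin n → ℝ) : ℝ≥0∞ :=
  ⨆ (a : Fin n → ℝ) (r : ℝ) (_ : 0 < r) (_ : x ∈ cube a r),
    ENNReal.ofReal r ^ (α - (m : ℝ) * n) *
      ∏ j, ∫⁻ y in cube a r, ENNReal.ofReal |f j y|

/-- The dyadic `m`-sublinear fractional maximal operator `𝔐_α^𝒟`. -/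
def dyadicFracMaximal {m : ℕ} (α : ℝ) (f : Fin m → (Fin n → ℝ) → ℝ)
    (x : Fin n → ℝ) : ℝ≥0∞ :=
  ⨆ (k : ℤ) (mv : Fin n → ℤ) (_ : x ∈ dyadicCube k mv),
    ENNReal.ofReal ((2 : ℝ) ^ (-k)) ^ (α - (m : ℝ) * n) *
      ∏ j, ∫⁻ y in dyadicCube k mv, ENNReal.ofReal |f j y|

/-- The dyadic `m`-linear fractional integral operator `ℑ_α^𝒟`. -/
def dyadicFracIntegral {m : ℕ} (α : ℝ) (f : Fin m → (Fin n → ℝ) → ℝ)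
    (x : Fin n → ℝ) : ℝ≥0∞ :=
  ∑' qk : ℤ × (Fin n → ℤ),
    (dyadicCube qk.1 qk.2).indicator
      (fun _ => ENNReal.ofReal ((2 : ℝ) ^ (-qk.1)) ^ (α - (m : ℝ) * n) *
        ∏ j, ∫⁻ y in dyadicCube qk.1 qk.2, ENNReal.ofReal |f j y|) x

/-- The `m`-linear fractional integral operator `ℑ_α` (with Euclidean distances). -/
def fracIntegral {m : ℕ} (α : ℝ) (f : Fin m → (Fin n → ℝ) → ℝ)
    (x : Fin n → ℝ) : ℝ≥0∞ :=
  ∫⁻ y : Fin m → Fin n → ℝ,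
    (∏ j, ENNReal.ofReal |f j (y j)|) /
      ENNReal.ofReal ((∑ j, Real.sqrt (∑ i, (x i - y j i) ^ 2)) ^ ((m : ℝ) * n - α))


section helpers

variable {n : ℕ}

lemma volume_cube (a : Fin n → ℝ) (r : ℝ) :
    volume (cube a r) = ENNReal.ofReal r ^ n := by
  have h : cube a r = Set.pi Set.univ (fun i => Set.Ico (a i) (a i + r)) := by
    ext y; simp [cube, Set.mem_pi]
  rw [h, volume_pi_pi]
  simp

lemma prod_rpow_sum {ι : Type*} (s : Finset ι) {x : ℝ≥0∞} (hx : x ≠ 0) (hx' : x ≠ ∞)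
    (c : ι → ℝ) : ∏ i ∈ s, x ^ c i = x ^ (∑ i ∈ s, c i) := by
  induction s using Finset.cons_induction with
  | empty => simp
  | cons i s hi ih => rw [Finset.prod_cons, Finset.sum_cons, ih, ← ENNReal.rpow_add _ _ hx hx']

lemma dyadic_mem_unique {k : ℤ} {mv : Fin n → ℤ} {x : Fin n → ℝ}
    (hx : x ∈ dyadicCube k mv) : mv = fun i => ⌊x i * (2:ℝ) ^ k⌋ := by
  funext i
  obtain ⟨h1, h2⟩ := hx i
  have h1' : (mv i : ℝ) * (2:ℝ) ^ (-k) ≤ x i := h1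
  have h2' : x i < (mv i : ℝ) * (2:ℝ) ^ (-k) + (2:ℝ) ^ (-k) := h2
  have hk : (0:ℝ) < (2:ℝ) ^ k := by positivity
  have hmul : (2:ℝ) ^ (-k) * (2:ℝ) ^ k = 1 := by
    rw [← zpow_add₀ (two_ne_zero (α := ℝ))]; simp
  symm
  rw [Int.floor_eq_iff]
  constructor
  · have h3 := mul_le_mul_of_nonneg_right h1' hk.le
    calc (mv i : ℝ) = (mv i : ℝ) * ((2:ℝ) ^ (-k) * (2:ℝ) ^ k) := by rw [hmul, mul_one]
      _ = (mv i : ℝ) * (2:ℝ) ^ (-k) * (2:ℝ) ^ k := by ring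
      _ ≤ x i * (2:ℝ) ^ k := h3
  · have h2'' : x i < ((mv i : ℝ) + 1) * (2:ℝ) ^ (-k) := by nlinarith
    have h3 := mul_lt_mul_of_pos_right h2'' hk
    calc x i * (2:ℝ) ^ k < ((mv i : ℝ) + 1) * (2:ℝ) ^ (-k) * (2:ℝ) ^ k := h3
      _ = (mv i : ℝ) + 1 := by rw [mul_assoc, hmul, mul_one]

lemma prod_lintegral_le {m : ℕ} (P : Fin m → ℝ) (hP : ∀ j, 1 < P j)
    (p p0 : ℝ) (hp0 : 0 < p0) (hp : 1 / p = ∑ j, 1 / P j) (f : Fin m → (Fin n → ℝ) → ℝ)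
    (hnorm : prodMorreyNorm P p p0 f = 1) (a : Fin n → ℝ) (r : ℝ) (hr : 0 < r) :
    ∏ j, ∫⁻ y in cube a r, ENNReal.ofReal |f j y| ≤
      ENNReal.ofReal r ^ ((n : ℝ) * ((m : ℝ) - 1 / p0)) := by
  have hr0 : ENNReal.ofReal r ≠ 0 := (ENNReal.ofReal_pos.2 hr).ne'
  have hV0 : volume (cube a r) ≠ 0 := by rw [volume_cube]; exact pow_ne_zero _ hr0
  have hVtop : volume (cube a r) ≠ ∞ := by
    rw [volume_cube]; exact ENNReal.pow_ne_top ENNReal.ofReal_ne_top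
  have holder : ∀ j, (∫⁻ y in cube a r, ENNReal.ofReal |f j y|) ≤
      (∫⁻ y in cube a r, ENNReal.ofReal |f j y| ^ P j) ^ (1 / P j) *
        volume (cube a r) ^ (1 - 1 / P j) := by
    intro j
    obtain ⟨g, hgm, hgle, hgint⟩ :=
      exists_measurable_le_lintegral_eq (volume.restrict (cube a r))
        fun y => ENNReal.ofReal |f j y|
    have hPj := hP j
    have hPj0 : (0:ℝ) < P j := lt_trans zero_lt_one hPj
    have hq : (P j).HolderConjugate ((P j) / (P j - 1)) :=
      Real.HolderConjugate.conjExponent hPj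
    have h1q : 1 / ((P j) / (P j - 1)) = 1 - 1 / P j := by
      field_simp
    have hH := ENNReal.lintegral_mul_le_Lp_mul_Lq (volume.restrict (cube a r)) hq
      hgm.aemeasurable (aemeasurable_const (b := (1:ℝ≥0∞)))
    simp only [Pi.mul_apply, mul_one, ENNReal.one_rpow, lintegral_one,
      Measure.restrict_apply_univ] at hH
    calc (∫⁻ y in cube a r, ENNReal.ofReal |f j y|) = ∫⁻ y in cube a r, g y := hgint
      _ ≤ (∫⁻ y in cube a r, g y ^ P j) ^ (1 / P j) *
          volume (cube a r) ^ (1 / ((P j) / (P j - 1))) := hH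
      _ ≤ (∫⁻ y in cube a r, ENNReal.ofReal |f j y| ^ P j) ^ (1 / P j) *
          volume (cube a r) ^ (1 - 1 / P j) := by
        rw [h1q]
        refine mul_le_mul' ?_ le_rfl
        refine ENNReal.rpow_le_rpow (lintegral_mono fun y => ?_) (by positivity)
        exact ENNReal.rpow_le_rpow (hgle y) hPj0.le
  have hsum1 : ∑ j : Fin m, (1 - 1 / P j) = (m : ℝ) - 1 / p := by
    rw [Finset.sum_sub_distrib, hp]; simp
  have key1 : ∏ j, (∫⁻ y in cube a r, ENNReal.ofReal |f j y|) ≤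
      (∏ j, (∫⁻ y in cube a r, ENNReal.ofReal |f j y| ^ P j) ^ (1 / P j)) *
        volume (cube a r) ^ ((m : ℝ) - 1 / p) := by
    calc ∏ j, (∫⁻ y in cube a r, ENNReal.ofReal |f j y|)
        ≤ ∏ j, ((∫⁻ y in cube a r, ENNReal.ofReal |f j y| ^ P j) ^ (1 / P j) *
            volume (cube a r) ^ (1 - 1 / P j)) := Finset.prod_le_prod' fun j _ => holder j
      _ = (∏ j, (∫⁻ y in cube a r, ENNReal.ofReal |f j y| ^ P j) ^ (1 / P j)) *
          ∏ j, volume (cube a r) ^ (1 - 1 / P j) := Finset.prod_mul_distrib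
      _ = _ := by rw [prod_rpow_sum _ hV0 hVtop, hsum1]
  have hterm : volume (cube a r) ^ (1 / p0 - 1 / p) *
      ∏ j, (∫⁻ y in cube a r, ENNReal.ofReal |f j y| ^ P j) ^ (1 / P j) ≤ 1 := by
    rw [← hnorm]
    exact le_iSup_of_le a (le_iSup_of_le r (le_iSup_of_le hr le_rfl))
  have key2 : ∏ j, (∫⁻ y in cube a r, ENNReal.ofReal |f j y| ^ P j) ^ (1 / P j) ≤
      volume (cube a r) ^ (1 / p - 1 / p0) := by
    have h := mul_le_mul_right hterm (volume (cube a r) ^ (1 / p - 1 / p0))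
    rwa [mul_one, ← mul_assoc, ← ENNReal.rpow_add _ _ hV0 hVtop,
      show 1 / p - 1 / p0 + (1 / p0 - 1 / p) = 0 by ring, ENNReal.rpow_zero, one_mul] at h
  calc ∏ j, (∫⁻ y in cube a r, ENNReal.ofReal |f j y|)
      ≤ (∏ j, (∫⁻ y in cube a r, ENNReal.ofReal |f j y| ^ P j) ^ (1 / P j)) *
        volume (cube a r) ^ ((m : ℝ) - 1 / p) := key1
    _ ≤ volume (cube a r) ^ (1 / p - 1 / p0) * volume (cube a r) ^ ((m : ℝ) - 1 / p) :=
        mul_le_mul_left key2 _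
    _ = volume (cube a r) ^ ((m : ℝ) - 1 / p0) := by
        rw [← ENNReal.rpow_add _ _ hV0 hVtop,
          show 1 / p - 1 / p0 + ((m : ℝ) - 1 / p) = (m : ℝ) - 1 / p0 by ring]
    _ = _ := by
        rw [volume_cube, ← ENNReal.rpow_natCast, ← ENNReal.rpow_mul]

end helpers

theorem statement11 (hn : 0 < n) (m : ℕ) (hm : 0 < m)
    (P : Fin m → ℝ) (hP : ∀ j, 1 < P j) (p p0 α β : ℝ)
    (hp : 1 / p = ∑ j, 1 / P j)
    (hβ : 0 < β) (hβα : β ≤ α) (hα : α < (m : ℝ) * n)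
    (hp0 : 0 < p0) (hp0n : p0 < n / α) :
    ∃ C : ℝ≥0∞, 0 < C ∧ C < ∞ ∧
      ∀ f : Fin m → (Fin n → ℝ) → ℝ, (∀ j x, 0 ≤ f j x) →
        prodMorreyNorm P p p0 f = 1 →
        ∀ x : Fin n → ℝ,
          dyadicFracIntegral α f x ≤
            C * dyadicFracIntegral β f x ^ ((n - α * p0) / (n - β * p0)) := by
  classical
  have hα0 : 0 < α := lt_of_lt_of_le hβ hβα
  have hαp0 : α * p0 < n := by
    have h := (lt_div_iff₀ hα0).mp hp0n
    linarith
  have hβp0 : β * p0 < n :=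
    lt_of_le_of_lt (mul_le_mul_of_nonneg_right hβα hp0.le) hαp0
  obtain heq | hba := eq_or_lt_of_le hβα
  · -- case β = α
    refine ⟨1, zero_lt_one, ENNReal.one_lt_top, fun f hf hnorm x => ?_⟩
    rw [heq, div_self (ne_of_gt (by linarith : (0:ℝ) < (n:ℝ) - α * p0)),
      ENNReal.rpow_one, one_mul]
  -- case β < α
  set δ : ℝ := α - β with hδdef
  set γ : ℝ := (n:ℝ) / p0 - α with hγdef
  have hδ : 0 < δ := sub_pos.2 hba
  have hγ : 0 < γ := by
    rw [hγdef, sub_pos, lt_div_iff₀ hp0]; linarith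
  have hδγ : 0 < δ + γ := by linarith
  have hδγ0 : δ + γ ≠ 0 := hδγ.ne'
  have hθ : ((n:ℝ) - α * p0) / ((n:ℝ) - β * p0) = γ / (δ + γ) := by
    rw [div_eq_div_iff (by linarith : ((n:ℝ) - β * p0) ≠ 0) hδγ0]
    rw [hδdef, hγdef]
    field_simp
    ring
  have hθpos : 0 < ((n:ℝ) - α * p0) / ((n:ℝ) - β * p0) :=
    div_pos (by linarith) (by linarith)
  have h2ne : (2:ℝ≥0∞) ≠ 0 := two_ne_zero
  have h2top : (2:ℝ≥0∞) ≠ ∞ := ENNReal.ofNat_ne_top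
  have hr1 : (2:ℝ≥0∞) ^ (-δ) < 1 :=
    ENNReal.rpow_lt_one_of_one_lt_of_neg one_lt_two (neg_lt_zero.2 hδ)
  have hr2 : (2:ℝ≥0∞) ^ (-γ) < 1 :=
    ENNReal.rpow_lt_one_of_one_lt_of_neg one_lt_two (neg_lt_zero.2 hγ)
  set C : ℝ≥0∞ := (1 - (2:ℝ≥0∞) ^ (-δ))⁻¹ + (1 - (2:ℝ≥0∞) ^ (-γ))⁻¹ with hC
  have hC0 : 0 < C := by
    have : 0 < (1 - (2:ℝ≥0∞) ^ (-δ))⁻¹ :=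
      ENNReal.inv_pos.2 (ne_top_of_le_ne_top ENNReal.one_ne_top tsub_le_self)
    exact lt_of_lt_of_le this le_self_add
  have hCtop : C < ∞ := by
    refine ENNReal.add_lt_top.2 ⟨ENNReal.inv_lt_top.2 ?_, ENNReal.inv_lt_top.2 ?_⟩
    · exact tsub_pos_of_lt hr1
    · exact tsub_pos_of_lt hr2
  refine ⟨C, hC0, hCtop, fun f hf hnorm x => ?_⟩
  set B := dyadicFracIntegral β f x with hB
  set E : ℤ → ℝ≥0∞ := fun k => ENNReal.ofReal ((2:ℝ) ^ (-k)) with hEdef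
  have hEpos : ∀ k : ℤ, (0:ℝ) < (2:ℝ) ^ (-k) := fun k => by positivity
  have hEk0 : ∀ k : ℤ, E k ≠ 0 := fun k => (ENNReal.ofReal_pos.2 (hEpos k)).ne'
  have hEktop : ∀ k : ℤ, E k ≠ ∞ := fun k => ENNReal.ofReal_ne_top
  have hE2 : ∀ (kk : ℤ) (e : ℝ), E kk ^ e = (2:ℝ≥0∞) ^ (-(kk:ℝ) * e) := by
    intro kk e
    have h1 : E kk = (2:ℝ≥0∞) ^ (-(kk:ℝ)) := by
      simp only [hEdef]
      rw [← Real.rpow_intCast 2 (-kk), ← ENNReal.ofReal_rpow_of_pos two_pos]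
      push_cast
      rw [ENNReal.ofReal_ofNat]
    rw [h1, ← ENNReal.rpow_mul]
  have hkey : ∀ (k : ℤ) (mv : Fin n → ℤ), x ∈ dyadicCube k mv →
      ENNReal.ofReal ((2:ℝ) ^ (-k)) ^ (α - (m:ℝ) * n) *
        (∏ j, ∫⁻ y in dyadicCube k mv, ENNReal.ofReal |f j y|) ≤
      min (E k ^ δ * B) (E k ^ (α - (n:ℝ) / p0)) := by
    intro k mv hx
    refine le_min ?_ ?_
    · have hTβ : ENNReal.ofReal ((2:ℝ) ^ (-k)) ^ (β - (m:ℝ) * n) *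
          (∏ j, ∫⁻ y in dyadicCube k mv, ENNReal.ofReal |f j y|) ≤ B := by
        rw [hB]
        unfold dyadicFracIntegral
        have h := ENNReal.le_tsum
          (f := fun qk : ℤ × (Fin n → ℤ) => (dyadicCube qk.1 qk.2).indicator
            (fun _ => ENNReal.ofReal ((2 : ℝ) ^ (-qk.1)) ^ (β - (m : ℝ) * n) *
              ∏ j, ∫⁻ y in dyadicCube qk.1 qk.2, ENNReal.ofReal |f j y|) x) ((k, mv))
        rwa [Set.indicator_of_mem hx] at h
      have e1 : ENNReal.ofReal ((2:ℝ) ^ (-k)) ^ (α - (m:ℝ) * n)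
          = E k ^ δ * ENNReal.ofReal ((2:ℝ) ^ (-k)) ^ (β - (m:ℝ) * n) := by
        simp only [hEdef]
        rw [← ENNReal.rpow_add _ _ (hEk0 k) (hEktop k)]
        congr 1
        rw [hδdef]; ring
      rw [e1, mul_assoc]
      exact mul_le_mul_right hTβ _
    · have hPi := prod_lintegral_le P hP p p0 hp0 hp f hnorm
        (fun i => ((mv i : ℝ)) * (2:ℝ) ^ (-k)) ((2:ℝ) ^ (-k)) (hEpos k)
      calc ENNReal.ofReal ((2:ℝ) ^ (-k)) ^ (α - (m:ℝ) * n) *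
            (∏ j, ∫⁻ y in dyadicCube k mv, ENNReal.ofReal |f j y|)
          ≤ ENNReal.ofReal ((2:ℝ) ^ (-k)) ^ (α - (m:ℝ) * n) *
            ENNReal.ofReal ((2:ℝ) ^ (-k)) ^ ((n:ℝ) * ((m:ℝ) - 1 / p0)) :=
            mul_le_mul_right hPi _
        _ = E k ^ (α - (n:ℝ) / p0) := by
            simp only [hEdef]
            rw [← ENNReal.rpow_add _ _ (hEk0 k) (hEktop k)]
            congr 1
            ring
  by_cases hB0 : B = 0
  · have hI : dyadicFracIntegral α f x ≤ ∑' _qk : ℤ × (Fin n → ℤ), (0:ℝ≥0∞) := by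
      unfold dyadicFracIntegral
      refine ENNReal.tsum_le_tsum fun qk => ?_
      by_cases hxQ : x ∈ dyadicCube qk.1 qk.2
      · rw [Set.indicator_of_mem hxQ]
        have h := (hkey qk.1 qk.2 hxQ).trans (min_le_left _ _)
        rwa [hB0, mul_zero] at h
      · rw [Set.indicator_of_notMem hxQ]
    refine le_trans (le_of_eq (by simpa using hI : dyadicFracIntegral α f x = 0)) (by positivity)
  by_cases hBtop : B = ∞
  · rw [hBtop, ENNReal.top_rpow_of_pos hθpos, ENNReal.mul_top hC0.ne']
    exact le_top
  -- main case : 0 < B < ∞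
  set u := B.toReal with hu
  have hu0 : 0 < u := ENNReal.toReal_pos hB0 hBtop
  set l : ℝ := u ^ (-(δ + γ)⁻¹) with hl
  have hl0 : 0 < l := Real.rpow_pos_of_pos hu0 _
  set k₀ : ℤ := ⌈-Real.logb 2 l⌉ with hk₀
  have hk1 : (2:ℝ) ^ (-k₀) ≤ l := by
    have h1 : -Real.logb 2 l ≤ (k₀ : ℝ) := Int.le_ceil _
    have h2 : ((-k₀ : ℤ) : ℝ) ≤ Real.logb 2 l := by push_cast; linarith
    calc (2:ℝ) ^ (-k₀) = (2:ℝ) ^ (((-k₀ : ℤ)) : ℝ) := (Real.rpow_intCast 2 _).symm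
      _ ≤ (2:ℝ) ^ Real.logb 2 l := Real.rpow_le_rpow_of_exponent_le one_le_two h2
      _ = l := Real.rpow_logb two_pos (by norm_num) hl0
  have hk2 : (2:ℝ) ^ (k₀ - 1) ≤ l⁻¹ := by
    have h1 : (k₀ : ℝ) < -Real.logb 2 l + 1 := Int.ceil_lt_add_one _
    have h2 : ((k₀ - 1 : ℤ) : ℝ) ≤ Real.logb 2 l⁻¹ := by
      rw [Real.logb_inv]; push_cast; linarith
    calc (2:ℝ) ^ (k₀ - 1) = (2:ℝ) ^ (((k₀ - 1 : ℤ)) : ℝ) := (Real.rpow_intCast 2 _).symm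
      _ ≤ (2:ℝ) ^ Real.logb 2 l⁻¹ := Real.rpow_le_rpow_of_exponent_le one_le_two h2
      _ = l⁻¹ := Real.rpow_logb two_pos (by norm_num) (by positivity)
  have hlE : ENNReal.ofReal l = B ^ (-(δ + γ)⁻¹) := by
    rw [hl, ← ENNReal.ofReal_rpow_of_pos hu0, hu, ENNReal.ofReal_toReal hBtop]
  have hlinvE : ENNReal.ofReal l⁻¹ = B ^ ((δ + γ)⁻¹) := by
    have h1 : l⁻¹ = u ^ ((δ + γ)⁻¹) := by
      rw [hl, ← Real.rpow_neg hu0.le, neg_neg]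
    rw [h1, ← ENNReal.ofReal_rpow_of_pos hu0, hu, ENNReal.ofReal_toReal hBtop]
  set c : ℤ → ℝ≥0∞ := fun k =>
    if k₀ ≤ k then E k ^ δ * B else E k ^ (α - (n:ℝ) / p0) with hc
  have step1 : dyadicFracIntegral α f x ≤
      ∑' qk : ℤ × (Fin n → ℤ),
        (if qk.2 = (fun i => ⌊x i * (2:ℝ) ^ qk.1⌋) then c qk.1 else 0) := by
    unfold dyadicFracIntegral
    refine ENNReal.tsum_le_tsum fun qk => ?_
    by_cases hxQ : x ∈ dyadicCube qk.1 qk.2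
    · rw [Set.indicator_of_mem hxQ, if_pos (dyadic_mem_unique hxQ)]
      have h := hkey qk.1 qk.2 hxQ
      simp only [hc]
      by_cases hk : k₀ ≤ qk.1
      · rw [if_pos hk]
        exact h.trans (min_le_left _ _)
      · rw [if_neg hk]
        exact h.trans (min_le_right _ _)
    · rw [Set.indicator_of_notMem hxQ]
      positivity
  have step2 : (∑' qk : ℤ × (Fin n → ℤ),
      (if qk.2 = (fun i => ⌊x i * (2:ℝ) ^ qk.1⌋) then c qk.1 else 0)) = ∑' k : ℤ, c k := by
    rw [ENNReal.tsum_prod']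
    exact tsum_congr fun k => tsum_ite_eq (fun i => ⌊x i * (2:ℝ) ^ k⌋) (fun _ => c k)
  have step3 : (∑' k : ℤ, c k) =
      (∑' j : ℕ, E (k₀ + (j:ℤ)) ^ δ * B) +
      (∑' j : ℕ, E (k₀ - 1 - (j:ℤ)) ^ (α - (n:ℝ) / p0)) := by
    have hsplit : ∀ k : ℤ, c k =
        (if k₀ ≤ k then E k ^ δ * B else 0) +
        (if k < k₀ then E k ^ (α - (n:ℝ) / p0) else 0) := by
      intro k
      simp only [hc]
      by_cases hk : k₀ ≤ k
      · rw [if_pos hk, if_pos hk, if_neg (not_lt.2 hk), add_zero]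
      · rw [if_neg hk, if_neg hk, if_pos (not_le.1 hk), zero_add]
    rw [tsum_congr hsplit, ENNReal.tsum_add]
    congr 1
    · have hinj : Function.Injective (fun j : ℕ => k₀ + (j:ℤ)) := by
        intro a b h
        simp only at h
        omega
      have hsupp : Function.support
          (fun k : ℤ => if k₀ ≤ k then E k ^ δ * B else 0)
          ⊆ Set.range (fun j : ℕ => k₀ + (j:ℤ)) := by
        intro k hk
        rw [Function.mem_support] at hk
        have hkk : k₀ ≤ k := by
          by_contra hcon
          exact hk (if_neg hcon)
        exact ⟨(k - k₀).toNat, by show k₀ + ((k - k₀).toNat : ℤ) = k; omega⟩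
      rw [← Function.Injective.tsum_eq hinj hsupp]
      refine tsum_congr fun j => ?_
      show (if k₀ ≤ k₀ + (j:ℤ) then E (k₀ + (j:ℤ)) ^ δ * B else 0) = E (k₀ + (j:ℤ)) ^ δ * B
      rw [if_pos (by omega : k₀ ≤ k₀ + (j:ℤ))]
    · have hinj : Function.Injective (fun j : ℕ => k₀ - 1 - (j:ℤ)) := by
        intro a b h
        simp only at h
        omega
      have hsupp : Function.support
          (fun k : ℤ => if k < k₀ then E k ^ (α - (n:ℝ) / p0) else 0)
          ⊆ Set.range (fun j : ℕ => k₀ - 1 - (j:ℤ)) := by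
        intro k hk
        rw [Function.mem_support] at hk
        have hkk : k < k₀ := by
          by_contra hcon
          exact hk (if_neg hcon)
        exact ⟨(k₀ - 1 - k).toNat, by show k₀ - 1 - ((k₀ - 1 - k).toNat : ℤ) = k; omega⟩
      rw [← Function.Injective.tsum_eq hinj hsupp]
      refine tsum_congr fun j => ?_
      show (if k₀ - 1 - (j:ℤ) < k₀ then E (k₀ - 1 - (j:ℤ)) ^ (α - (n:ℝ) / p0) else 0)
        = E (k₀ - 1 - (j:ℤ)) ^ (α - (n:ℝ) / p0)
      rw [if_pos (by omega : k₀ - 1 - (j:ℤ) < k₀)]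
  have sum1 : (∑' j : ℕ, E (k₀ + (j:ℤ)) ^ δ * B)
      ≤ B ^ (γ / (δ + γ)) * (1 - (2:ℝ≥0∞) ^ (-δ))⁻¹ := by
    have hterm : ∀ j : ℕ, E (k₀ + (j:ℤ)) ^ δ * B
        = (E k₀ ^ δ * B) * ((2:ℝ≥0∞) ^ (-δ)) ^ j := by
      intro j
      rw [hE2 (k₀ + (j:ℤ)) δ, hE2 k₀ δ,
        show (-((k₀ + (j:ℤ) : ℤ)):ℝ) * δ = (-(k₀:ℝ)) * δ + (-δ) * (j:ℝ) by push_cast; ring,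
        ENNReal.rpow_add _ _ h2ne h2top, ENNReal.rpow_mul 2 (-δ) (j:ℝ),
        ENNReal.rpow_natCast ((2:ℝ≥0∞) ^ (-δ)) j]
      ring
    rw [tsum_congr hterm, ENNReal.tsum_mul_left, ENNReal.tsum_geometric]
    refine mul_le_mul_left ?_ _
    have h1 : E k₀ ^ δ ≤ B ^ (-(δ + γ)⁻¹ * δ) := by
      rw [ENNReal.rpow_mul, ← hlE]
      refine ENNReal.rpow_le_rpow ?_ hδ.le
      simp only [hEdef]
      exact ENNReal.ofReal_le_ofReal hk1
    calc E k₀ ^ δ * B ≤ B ^ (-(δ + γ)⁻¹ * δ) * B := mul_le_mul_left h1 B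
      _ = B ^ (-(δ + γ)⁻¹ * δ) * B ^ (1:ℝ) := by rw [ENNReal.rpow_one]
      _ = B ^ (-(δ + γ)⁻¹ * δ + 1) := (ENNReal.rpow_add _ _ hB0 hBtop).symm
      _ = B ^ (γ / (δ + γ)) := by
          congr 1
          field_simp
          ring
  have sum2 : (∑' j : ℕ, E (k₀ - 1 - (j:ℤ)) ^ (α - (n:ℝ) / p0))
      ≤ B ^ (γ / (δ + γ)) * (1 - (2:ℝ≥0∞) ^ (-γ))⁻¹ := by
    have hαγ : α - (n:ℝ) / p0 = -γ := by rw [hγdef]; ring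
    have hterm : ∀ j : ℕ, E (k₀ - 1 - (j:ℤ)) ^ (α - (n:ℝ) / p0)
        = (E (1 - k₀) ^ γ) * ((2:ℝ≥0∞) ^ (-γ)) ^ j := by
      intro j
      rw [hαγ, hE2 (k₀ - 1 - (j:ℤ)) (-γ), hE2 (1 - k₀) γ,
        show (-((k₀ - 1 - (j:ℤ) : ℤ)):ℝ) * (-γ)
          = (-((1 - k₀ : ℤ):ℝ)) * γ + (-γ) * (j:ℝ) by push_cast; ring,
        ENNReal.rpow_add _ _ h2ne h2top, ENNReal.rpow_mul 2 (-γ) (j:ℝ),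
        ENNReal.rpow_natCast ((2:ℝ≥0∞) ^ (-γ)) j]
    rw [tsum_congr hterm, ENNReal.tsum_mul_left, ENNReal.tsum_geometric]
    refine mul_le_mul_left ?_ _
    have hle : E (1 - k₀) ≤ ENNReal.ofReal l⁻¹ := by
      simp only [hEdef]
      refine ENNReal.ofReal_le_ofReal ?_
      rw [show -(1 - k₀) = k₀ - 1 by ring]
      exact hk2
    calc E (1 - k₀) ^ γ ≤ (ENNReal.ofReal l⁻¹) ^ γ := ENNReal.rpow_le_rpow hle hγ.le
      _ = (B ^ ((δ + γ)⁻¹)) ^ γ := by rw [hlinvE]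
      _ = B ^ ((δ + γ)⁻¹ * γ) := (ENNReal.rpow_mul _ _ _).symm
      _ = B ^ (γ / (δ + γ)) := by congr 1; ring
  calc dyadicFracIntegral α f x
      ≤ ∑' qk : ℤ × (Fin n → ℤ),
        (if qk.2 = (fun i => ⌊x i * (2:ℝ) ^ qk.1⌋) then c qk.1 else 0) := step1
    _ = ∑' k : ℤ, c k := step2
    _ = (∑' j : ℕ, E (k₀ + (j:ℤ)) ^ δ * B) +
        (∑' j : ℕ, E (k₀ - 1 - (j:ℤ)) ^ (α - (n:ℝ) / p0)) := step3
    _ ≤ B ^ (γ / (δ + γ)) * (1 - (2:ℝ≥0∞) ^ (-δ))⁻¹ +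
        B ^ (γ / (δ + γ)) * (1 - (2:ℝ≥0∞) ^ (-γ))⁻¹ := add_le_add sum1 sum2
    _ = C * B ^ (γ / (δ + γ)) := by rw [hC]; ring
    _ = C * B ^ (((n:ℝ) - α * p0) / ((n:ℝ) - β * p0)) := by rw [hθ]
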